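/- Every complement-connected graph G with at least 5 vertices has a vertex v such that the induced subgraph G − v (obtained by deleting v) is still complement-connected. -/

import Mathlib

namespace PaperFO

variable {V : Type}

/-- The adjacency relation at decomposition depth `i`: distinct vertices
`x, y` lying in a common member `F` of the depth-`i` decomposition `Dec^i G`
are adjacent in `F` iff `{x,y} ∈^{i+1} E(G)`, i.e. iff `G.Adj x y ↔ Even i`. -/
def parityAdj (G : SimpleGraph V) (i : ℕ) (x y : V) : Prop :=
  x ≠ y ∧ (G.Adj x y ↔ Even i)

/-- `cellRel G i x y` says that `x` and `y` lie in the same member of the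
depth-`i` decomposition `Dec^i G` of `G` (for a connected graph `G`); these
vertex sets are the cells of the partition `P_i` of the paper. -/
def cellRel (G : SimpleGraph V) : ℕ → V → V → Prop
  | 0 => Relation.ReflTransGen (fun a b => parityAdj G 0 a b)
  | i + 1 => Relation.ReflTransGen (fun a b => cellRel G i a b ∧ parityAdj G (i + 1) a b)

/-- The member of `Dec^i G` containing the vertex `v`, as a graph: the
depth-`i` environment `env_i(v; G)` of `v`. -/
def envGraph (G : SimpleGraph V) (i : ℕ) (v : V) :
    SimpleGraph {u : V // cellRel G i v u} where
  Adj x y := parityAdj G i x.1 y.1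
  symm := ⟨fun x y h => ⟨h.1.symm, (G.adj_comm y.1 x.1).trans h.2⟩⟩
  loopless := ⟨fun x h => h.1 rfl⟩

/-- The rank of a connected graph `G`: the smallest `k` such that the
partition `P_{k+1}` coincides with `P_k` (equivalently, such that `P_k`
consists of the vertex sets of the cocomponents of `G`). -/
noncomputable def rank (G : SimpleGraph V) : ℕ :=
  sInf {k : ℕ | ∀ x y : V, cellRel G (k + 1) x y ↔ cellRel G k x y}

/-- A connected graph `G` of rank `k` is uniform if `Dec^{k-1} G` contains no
complement-connected graph, i.e. every depth-`(k-1)` cell splits further;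
every complement-connected graph (rank `0`) is uniform. -/
def Uniform (G : SimpleGraph V) : Prop :=
  rank G = 0 ∨
    ∀ x : V, ∃ y : V, cellRel G (rank G - 1) x y ∧ ¬ cellRel G (rank G) x y

/-- A connected graph `G` of rank `k` is inclusion-free if for every
`0 ≤ i ≤ k`: (1) for any `K ∈ Dec^i G`, no two distinct connected components
of the complement of `K` are isomorphic; (2) no member of `Dec^i G` is
properly embeddable into another (embeddable implies isomorphic). -/
def InclusionFree (G : SimpleGraph V) : Prop :=
  ∀ i ≤ rank G,
    (∀ x y : V, cellRel G i x y → ¬ cellRel G (i + 1) x y →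
      ¬ Nonempty (envGraph G (i + 1) x ≃g envGraph G (i + 1) y)) ∧
    (∀ x y : V, Nonempty (envGraph G i x ↪g envGraph G i y) →
      Nonempty (envGraph G i x ≃g envGraph G i y))

/-- A graph is complement-connected if both it and its complement are
connected (in particular its vertex set is nonempty). -/
def CoConnected (G : SimpleGraph V) : Prop := G.Connected ∧ (Gᶜ).Connected

/-- A cocomponent of `G`: an inclusion-maximal complement-connected induced
subgraph of `G`, given by its vertex set `S`. -/
def IsCocomponent (G : SimpleGraph V) (S : Set V) : Prop :=
  CoConnected (G.induce S) ∧
    ∀ T : Set V, S ⊆ T → CoConnected (G.induce T) → T = S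

end PaperFO

namespace PaperFO




open SimpleGraph

variable {V : Type}

/-- Chain relation: adjacency within a set `S`. -/
def chainR (G : SimpleGraph V) (S : Set V) (x y : V) : Prop := x ∈ S ∧ y ∈ S ∧ G.Adj x y

lemma reach_of_chain {G : SimpleGraph V} {S : Set V} {x y : V}
    (h : Relation.ReflTransGen (chainR G S) x y) :
    ∀ (hx : x ∈ S) (hy : y ∈ S), (G.induce S).Reachable ⟨x, hx⟩ ⟨y, hy⟩ := by
  induction h with
  | refl => intro hx hy; exact Reachable.refl _
  | tail hxb hbc ih =>
    intro hx hy
    exact (ih hx hbc.1).trans (SimpleGraph.Adj.reachable (by exact hbc.2.2))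

lemma connected_induce_of_chains {G : SimpleGraph V} {S : Set V} {r : V} (hr : r ∈ S)
    (h : ∀ w ∈ S, Relation.ReflTransGen (chainR G S) w r) : (G.induce S).Connected := by
  rw [SimpleGraph.connected_iff]
  refine ⟨fun x y => ?_, ⟨⟨r, hr⟩⟩⟩
  obtain ⟨x, hx⟩ := x
  obtain ⟨y, hy⟩ := y
  exact (reach_of_chain (h x hx) hx hr).trans (reach_of_chain (h y hy) hy hr).symm

lemma not_connected_induce_elim {G : SimpleGraph V} {S : Set V} (hS : S.Nonempty)
    (h : ¬ (G.induce S).Connected) :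
    ∃ a ∈ S, ∃ b ∈ S, ¬ Relation.ReflTransGen (chainR G S) a b := by
  have hne : Nonempty S := ⟨⟨hS.choose, hS.choose_spec⟩⟩
  have hpre : ¬ (G.induce S).Preconnected := fun hp => h ⟨hp⟩
  simp only [SimpleGraph.Preconnected, not_forall] at hpre
  obtain ⟨⟨a, ha⟩, ⟨b, hb⟩, hab⟩ := hpre
  exact ⟨a, ha, b, hb, fun hR => hab (reach_of_chain hR ha hb)⟩

lemma compl_induce (G : SimpleGraph V) (S : Set V) :
    (G.induce S)ᶜ = (Gᶜ).induce S := by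
  ext x y
  constructor
  · rintro ⟨hne, hadj⟩
    exact ⟨fun he => hne (Subtype.ext he), fun h2 => hadj h2⟩
  · rintro h
    exact ⟨fun he => h.1 (congrArg Subtype.val he), fun h2 => h.2 h2⟩

lemma compl_connected_of_not_connected {W : Type} [Nonempty W] {H : SimpleGraph W}
    (h : ¬ H.Connected) : Hᶜ.Connected := by
  have hpre : ¬ H.Preconnected := fun hp => h ⟨hp⟩
  simp only [SimpleGraph.Preconnected, not_forall] at hpre
  obtain ⟨a, b, hab⟩ := hpre
  rw [SimpleGraph.connected_iff]
  refine ⟨fun x y => ?_, inferInstance⟩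
  by_cases hxy : H.Reachable x y
  · -- x cannot reach both a and b
    have hkey : ¬ H.Reachable x a ∨ ¬ H.Reachable x b := by
      by_contra hc
      push_neg at hc
      exact hab (hc.1.symm.trans hc.2)
    obtain hc | hc := hkey
    · have hyc : ¬ H.Reachable y a := fun h' => hc (hxy.trans h')
      have h1 : Hᶜ.Adj x a := ⟨fun he => hc (he ▸ Reachable.refl x), fun hadj => hc hadj.reachable⟩
      have h2 : Hᶜ.Adj y a := ⟨fun he => hyc (he ▸ Reachable.refl y), fun hadj => hyc hadj.reachable⟩
      exact h1.reachable.trans h2.reachable.symm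
    · have hyc : ¬ H.Reachable y b := fun h' => hc (hxy.trans h')
      have h1 : Hᶜ.Adj x b := ⟨fun he => hc (he ▸ Reachable.refl x), fun hadj => hc hadj.reachable⟩
      have h2 : Hᶜ.Adj y b := ⟨fun he => hyc (he ▸ Reachable.refl y), fun hadj => hyc hadj.reachable⟩
      exact h1.reachable.trans h2.reachable.symm
  · have h1 : Hᶜ.Adj x y := ⟨fun he => hxy (he ▸ Reachable.refl x), fun hadj => hxy hadj.reachable⟩
    exact h1.reachable




open SimpleGraph
variable {V : Type}

lemma exists_neighbor [Fintype V] {G : SimpleGraph V} (hG : G.Connected)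
    (h2 : 1 < Fintype.card V) (u : V) : ∃ w, G.Adj u w := by
  obtain ⟨v, hv⟩ := Fintype.exists_ne_of_one_lt_card h2 u
  obtain ⟨p, -⟩ := (hG u v).exists_walk_length_eq_dist
  have hnil : ¬ p.Nil := SimpleGraph.Walk.not_nil_of_ne (Ne.symm hv)
  exact ⟨p.getVert 1, p.adj_snd hnil⟩

lemma exists_noncut [Fintype V] {G : SimpleGraph V} (hG : G.Connected)
    (h2 : 1 < Fintype.card V) :
    ∃ v : V, (G.induce {x : V | x ≠ v}).Connected := by
  classical
  have hne : Nonempty V := ⟨hG.nonempty.some⟩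
  obtain ⟨r⟩ := hne
  obtain ⟨v, -, hv⟩ := Finset.exists_max_image Finset.univ (fun x => G.dist r x)
    ⟨r, Finset.mem_univ r⟩
  have hv' : ∀ x : V, G.dist r x ≤ G.dist r v := fun x => hv x (Finset.mem_univ x)
  -- r ≠ v
  obtain ⟨w0, hw0⟩ := Fintype.exists_ne_of_one_lt_card h2 r
  have hrv : r ≠ v := by
    intro he
    have h1 : 0 < G.dist r w0 := (hG r w0).pos_dist_of_ne (Ne.symm hw0)
    have := hv' w0
    rw [← he] at this
    rw [SimpleGraph.dist_self] at this
    omega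
  refine ⟨v, connected_induce_of_chains (show r ∈ {x : V | x ≠ v} from hrv) ?_⟩
  intro w hw
  -- strong induction on dist w r
  have key : ∀ n : ℕ, ∀ w : V, w ≠ v → G.dist r w = n →
      Relation.ReflTransGen (chainR G {x : V | x ≠ v}) w r := by
    intro n
    induction n using Nat.strong_induction_on with
    | _ n ih =>
      intro w hwv hd
      by_cases hwr : w = r
      · subst hwr; exact Relation.ReflTransGen.refl
      · obtain ⟨p, hp⟩ := (hG w r).exists_walk_length_eq_dist
        have hnil : ¬ p.Nil := SimpleGraph.Walk.not_nil_of_ne hwr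
        have hadj : G.Adj w (p.getVert 1) := p.adj_snd hnil
        have htl : p.tail.length + 1 = p.length := SimpleGraph.Walk.length_tail_add_one hnil
        have hd1 : G.dist (p.getVert 1) r ≤ p.tail.length := SimpleGraph.dist_le p.tail
        have hc1 : G.dist (p.getVert 1) r = G.dist r (p.getVert 1) := SimpleGraph.dist_comm
        have hc2 : G.dist w r = G.dist r w := SimpleGraph.dist_comm
        have hdrw' : G.dist r (p.getVert 1) < G.dist r w := by omega
        have hw'v : p.getVert 1 ≠ v := fun he => by
          rw [he] at hdrw'; have := hv' w; omega
        exact Relation.ReflTransGen.head ⟨hwv, hw'v, hadj⟩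
          (ih (G.dist r (p.getVert 1)) (by omega) _ hw'v rfl)
  exact key (G.dist r w) w hw rfl




open SimpleGraph
variable {V : Type}

lemma bound [Fintype V] {G : SimpleGraph V} (hG : G.Connected)
    (h5 : 5 ≤ Fintype.card V) {u : V}
    (hu : ¬ ((Gᶜ).induce {x : V | x ≠ u}).Connected) :
    ({a : V | ¬ (G.induce {x : V | x ≠ a}).Connected}).ncard ≤ 2 := by
  classical
  have h2 : 1 < Fintype.card V := by omega
  set S : Set V := {x : V | x ≠ u} with hS
  have hSne : S.Nonempty := by
    obtain ⟨x, hx⟩ := Fintype.exists_ne_of_one_lt_card h2 u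
    exact ⟨x, hx⟩
  -- G − u is connected (complement of disconnected graph)
  have hSnemp : Nonempty S := ⟨⟨hSne.choose, hSne.choose_spec⟩⟩
  have hPu : (G.induce S).Connected := by
    have := compl_connected_of_not_connected (W := S) (H := (Gᶜ).induce S) hu
    rwa [← compl_induce, compl_compl] at this
  -- extract the join structure of G − u
  obtain ⟨a₀, ha₀S, b₀, hb₀S, hnr⟩ := not_connected_induce_elim hSne hu
  set X : Set V := {x : V | x ∈ S ∧ Relation.ReflTransGen (chainR Gᶜ S) a₀ x} with hX
  set Y : Set V := {x : V | x ∈ S ∧ ¬ Relation.ReflTransGen (chainR Gᶜ S) a₀ x} with hY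
  have ha₀X : a₀ ∈ X := ⟨ha₀S, Relation.ReflTransGen.refl⟩
  have hb₀Y : b₀ ∈ Y := ⟨hb₀S, hnr⟩
  have hjoin : ∀ x ∈ X, ∀ y ∈ Y, G.Adj x y := by
    intro x hx y hy
    have hne : x ≠ y := fun he => hy.2 (he ▸ hx.2)
    by_contra hadj
    exact hy.2 (hx.2.tail ⟨hx.1, hy.1, ⟨hne, hadj⟩⟩)
  obtain ⟨w₀, hw₀⟩ := exists_neighbor hG h2 u
  have hw₀S : w₀ ∈ S := hw₀.ne'
  -- classification of vertices whose removal disconnects G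
  have hclass : ∀ a : V, ¬ (G.induce {x : V | x ≠ a}).Connected →
      (∀ w, G.Adj u w → w = a) ∨ (∀ x ∈ X, x = a) ∨ (∀ y ∈ Y, y = a) := by
    intro a ha
    have hau : a ≠ u := fun he => ha (he ▸ hPu)
    by_contra hc
    push_neg at hc
    obtain ⟨⟨w₁, hw₁adj, hw₁a⟩, ⟨x', hx'X, hx'a⟩, ⟨y', hy'Y, hy'a⟩⟩ := hc
    set S' : Set V := {x : V | x ≠ a} with hS'
    have hx'S' : x' ∈ S' := hx'a
    -- every vertex of S reaching x' within S'
    have hchain : ∀ w, w ∈ S → w ≠ a → Relation.ReflTransGen (chainR G S') w x' := by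
      intro w hwS hwa
      rcases Classical.em (Relation.ReflTransGen (chainR Gᶜ S) a₀ w) with hwX | hwY
      · -- w ∈ X : w – y' – x'
        have h1 : G.Adj w y' := hjoin w ⟨hwS, hwX⟩ y' hy'Y
        have h2 : G.Adj y' x' := (hjoin x' hx'X y' hy'Y).symm
        exact (Relation.ReflTransGen.head ⟨hwa, hy'a, h1⟩
          (Relation.ReflTransGen.head ⟨hy'a, hx'a, h2⟩ Relation.ReflTransGen.refl))
      · -- w ∈ Y : w – x'
        have h1 : G.Adj w x' := (hjoin x' hx'X w ⟨hwS, hwY⟩).symm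
        exact Relation.ReflTransGen.head ⟨hwa, hx'a, h1⟩ Relation.ReflTransGen.refl
    have hconn : (G.induce S').Connected := by
      refine connected_induce_of_chains hx'S' ?_
      intro w hwS'
      by_cases hwu : w = u
      · subst hwu
        have hw₁S : w₁ ∈ S := hw₁adj.ne'
        exact Relation.ReflTransGen.head ⟨hwS', hw₁a, hw₁adj⟩ (hchain w₁ hw₁S hw₁a)
      · exact hchain w hwu hwS'
    exact ha hconn
  -- at most one of the two singleton-side cases occurs
  have hnotboth : ¬ ((∃ a, ¬ (G.induce {x : V | x ≠ a}).Connected ∧ ∀ x ∈ X, x = a) ∧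
      (∃ b, ¬ (G.induce {x : V | x ≠ b}).Connected ∧ ∀ y ∈ Y, y = b)) := by
    rintro ⟨⟨a, -, haX⟩, ⟨b, -, hbY⟩⟩
    have huniv : (Set.univ : Set V) ⊆ {u, a, b} := by
      intro v _
      by_cases hvu : v = u
      · exact Or.inl hvu
      · rcases Classical.em (Relation.ReflTransGen (chainR Gᶜ S) a₀ v) with hv | hv
        · exact Or.inr (Or.inl (haX v ⟨hvu, hv⟩))
        · exact Or.inr (Or.inr (hbY v ⟨hvu, hv⟩))
    have hcard : Fintype.card V ≤ 3 := by
      have h1 : (Set.univ : Set V).ncard ≤ ({u, a, b} : Set V).ncard :=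
        Set.ncard_le_ncard huniv (Set.toFinite _)
      have h2 : ({u, a, b} : Set V).ncard ≤ 3 := by
        apply le_trans (Set.ncard_insert_le _ _)
        have := Set.ncard_insert_le a ({b} : Set V)
        simp [Set.ncard_singleton] at this ⊢
        omega
      rw [Set.ncard_univ, Nat.card_eq_fintype_card] at h1
      omega
    omega
  -- conclude
  by_cases hXc : ∃ a, ¬ (G.induce {x : V | x ≠ a}).Connected ∧ ∀ x ∈ X, x = a
  · have hsub : {a : V | ¬ (G.induce {x : V | x ≠ a}).Connected} ⊆ {w₀, a₀} := by
      intro a ha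
      rcases hclass a ha with h1 | h2 | h3
      · exact Or.inl (h1 w₀ hw₀).symm
      · exact Or.inr (h2 a₀ ha₀X).symm
      · exact absurd ⟨hXc, ⟨a, ha, h3⟩⟩ hnotboth
    calc ({a : V | ¬ (G.induce {x : V | x ≠ a}).Connected}).ncard
        ≤ ({w₀, a₀} : Set V).ncard := Set.ncard_le_ncard hsub (Set.toFinite _)
      _ ≤ 2 := by
          apply le_trans (Set.ncard_insert_le _ _)
          simp [Set.ncard_singleton]
  · have hsub : {a : V | ¬ (G.induce {x : V | x ≠ a}).Connected} ⊆ {w₀, b₀} := by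
      intro a ha
      rcases hclass a ha with h1 | h2 | h3
      · exact Or.inl (h1 w₀ hw₀).symm
      · exact absurd ⟨a, ha, h2⟩ hXc
      · exact Or.inr (h3 b₀ hb₀Y).symm
    calc ({a : V | ¬ (G.induce {x : V | x ≠ a}).Connected}).ncard
        ≤ ({w₀, b₀} : Set V).ncard := Set.ncard_le_ncard hsub (Set.toFinite _)
      _ ≤ 2 := by
          apply le_trans (Set.ncard_insert_le _ _)
          simp [Set.ncard_singleton]


theorem statement_5 {V : Type} [Fintype V] (G : SimpleGraph V)
    (hcc : CoConnected G) (h5 : 5 ≤ Fintype.card V) :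
    ∃ v : V, CoConnected (G.induce {u : V | u ≠ v}) := by
  classical
  by_contra hbad
  push_neg at hbad
  obtain ⟨hG, hGc⟩ := hcc
  have h2 : 1 < Fintype.card V := by omega
  have hor : ∀ v : V, ¬ (G.induce {x : V | x ≠ v}).Connected ∨
      ¬ ((Gᶜ).induce {x : V | x ≠ v}).Connected := by
    intro v
    by_contra hc
    push_neg at hc
    refine hbad v ⟨hc.1, ?_⟩
    rw [compl_induce]
    exact hc.2
  obtain ⟨v₁, hv₁⟩ := exists_noncut hG h2
  have hB1 : ¬ ((Gᶜ).induce {x : V | x ≠ v₁}).Connected := (hor v₁).resolve_left (not_not.mpr hv₁)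
  obtain ⟨v₂, hv₂⟩ := exists_noncut hGc h2
  have hA1 : ¬ (G.induce {x : V | x ≠ v₂}).Connected := by
    refine (hor v₂).resolve_right (not_not.mpr ?_)
    exact hv₂
  have hcardA := bound hG h5 hB1
  have hcardB : ({b : V | ¬ ((Gᶜ).induce {x : V | x ≠ b}).Connected}).ncard ≤ 2 := by
    refine bound hGc h5 (u := v₂) ?_
    rw [compl_compl]
    exact hA1
  have huniv : (Set.univ : Set V) ⊆
      {a : V | ¬ (G.induce {x : V | x ≠ a}).Connected} ∪
      {b : V | ¬ ((Gᶜ).induce {x : V | x ≠ b}).Connected} := by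
    intro v _
    exact hor v
  have h1 : (Set.univ : Set V).ncard ≤
      ({a : V | ¬ (G.induce {x : V | x ≠ a}).Connected} ∪
       {b : V | ¬ ((Gᶜ).induce {x : V | x ≠ b}).Connected}).ncard :=
    Set.ncard_le_ncard huniv (Set.toFinite _)
  have h3 := Set.ncard_union_le
    {a : V | ¬ (G.induce {x : V | x ≠ a}).Connected}
    {b : V | ¬ ((Gᶜ).induce {x : V | x ≠ b}).Connected}
  rw [Set.ncard_univ, Nat.card_eq_fintype_card] at h1
  omega

end PaperFO
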